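/- Profile split bound: let B be a set of n boxes in R^d with d-th profile p (every hyperplane orthogonal to dimension i intersects at most p boxes of B for the chosen coordinate i). Sweeping coordinate i and cutting after every 2p endpoints partitions R into at most ⌈n/p⌉ + 1 slabs such that each slab's preimage region intersects at most 3p boxes of B. -/

import Mathlib

open Set Finset

lemma card_comp_perm {n : ℕ} (σ : Equiv.Perm (Fin n)) (P : Fin n → Prop) [DecidablePred P] :
    (univ.filter (fun j => P (σ j))).card = (univ.filter P).card := by
  apply Finset.card_bij (fun j _ => σ j)
  · intro j hj; simp_all
  · intro j1 h1 j2 h2 h; exact σ.injective h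
  · intro b hb; exact ⟨σ.symm b, by simp_all, by simp⟩

lemma key_le {n : ℕ} (y : Fin n → ℝ) (hmono : Monotone y) (i : Fin n) :
    (i : ℕ) + 1 ≤ (univ.filter (fun j => y j ≤ y i)).card := by
  have hsub : Finset.Iic i ⊆ univ.filter (fun j => y j ≤ y i) := by
    intro j hj; simp only [Finset.mem_Iic] at hj
    simp [hmono hj]
  calc (i:ℕ) + 1 = (Finset.Iic i).card := (Fin.card_Iic i).symm
    _ ≤ _ := Finset.card_le_card hsub

lemma key_lt {n : ℕ} (y : Fin n → ℝ) (hmono : Monotone y) (i : Fin n) :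
    (univ.filter (fun j => y j < y i)).card ≤ (i : ℕ) := by
  have hsub : univ.filter (fun j => y j < y i) ⊆ Finset.Iio i := by
    intro j hj; simp only [Finset.mem_filter] at hj
    simp only [Finset.mem_Iio]
    by_contra h
    exact absurd (hmono (not_lt.1 h)) (not_le.2 hj.2)
  calc _ ≤ (Finset.Iio i).card := Finset.card_le_card hsub
    _ = i := Fin.card_Iio i

theorem profile_split_bound
    (n p : ℕ) (hp : 0 < p) (a c : Fin n → ℝ) (hac : ∀ j, a j ≤ c j)
    (hprofile : ∀ t : ℝ, Nat.card {j : Fin n // a j ≤ t ∧ t ≤ c j} ≤ p) :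
    ∃ (m : ℕ) (S : Fin m → Set ℝ),
      m ≤ (n + p - 1) / p + 1 ∧
      (⋃ k, S k) = Set.univ ∧
      (∀ k, (∃ s t : ℝ, S k = Set.Icc s t) ∨ (∃ t : ℝ, S k = Set.Iic t) ∨
            (∃ s : ℝ, S k = Set.Ici s) ∨ S k = Set.univ) ∧
      ∀ k, Nat.card {j : Fin n // (Set.Icc (a j) (c j) ∩ S k).Nonempty} ≤ 3 * p := by
  classical
  have hprof : ∀ t : ℝ, (univ.filter (fun j => a j ≤ t ∧ t ≤ c j)).card ≤ p := by
    intro t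
    have h := hprofile t
    rwa [Nat.card_eq_fintype_card, Fintype.card_subtype] at h
  have hcardconv : ∀ (Q : Fin n → Prop), Nat.card {j : Fin n // Q j}
      = (univ.filter Q).card := by
    intro Q
    rw [Nat.card_eq_fintype_card, Fintype.card_subtype]
  set q := n / p with hq
  rcases Nat.eq_zero_or_pos q with hq0 | hq1
  · -- n < p : one slab
    have hnp : n < p := (Nat.div_eq_zero_iff.1 hq0).resolve_left (by omega)
    refine ⟨1, fun _ => Set.univ, Nat.le_add_left 1 _, by
        rw [Set.iUnion_eq_univ_iff]; exact fun x => ⟨0, Set.mem_univ x⟩,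
      fun k => Or.inr (Or.inr (Or.inr rfl)), fun k => ?_⟩
    rw [hcardconv]
    calc _ ≤ (univ : Finset (Fin n)).card := Finset.card_le_card (Finset.filter_subset _ _)
      _ = n := by simp
      _ ≤ 3 * p := by omega
  -- main case
  have hqp : q * p ≤ n := Nat.div_mul_le_self n p
  have hnq : n < q * p + p := by
    have h1 : n % p < p := Nat.mod_lt n hp
    have h2 : p * (n / p) + n % p = n := Nat.div_add_mod n p
    have h3 : p * (n / p) = q * p := by rw [hq]; ring
    omega
  have hn : 0 < n := by
    have : 1 * 1 ≤ q * p := Nat.mul_le_mul hq1 hp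
    omega
  set σ := Tuple.sort a with hσ
  set y : Fin n → ℝ := a ∘ σ with hy
  have hmono : Monotone y := Tuple.monotone_sort a
  have key_le' : ∀ i : Fin n, (i : ℕ) + 1 ≤ (univ.filter (fun j => a j ≤ y i)).card := by
    intro i
    have h := key_le y hmono i
    rwa [show (univ.filter (fun j => y j ≤ y i)).card
        = (univ.filter (fun j => a j ≤ y i)).card from
      card_comp_perm σ (fun j => a j ≤ y i)] at h
  have key_lt' : ∀ i : Fin n, (univ.filter (fun j => a j < y i)).card ≤ (i : ℕ) := by
    intro i
    have h := key_lt y hmono i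
    rwa [show (univ.filter (fun j => y j < y i)).card
        = (univ.filter (fun j => a j < y i)).card from
      card_comp_perm σ (fun j => a j < y i)] at h
  -- cut points
  have hidx : ∀ k : ℕ, min ((k + 1) * p - 1) (n - 1) < n := by intro k; omega
  set idx : ℕ → Fin n := fun k => ⟨min ((k + 1) * p - 1) (n - 1), hidx k⟩ with hidxdef
  set b : ℕ → ℝ := fun k => y (idx k) with hb
  have hidxval : ∀ k : ℕ, k < q → ((idx k : ℕ)) = (k + 1) * p - 1 := by
    intro k hk
    simp only [hidxdef]
    have h1 : (k + 1) * p ≤ q * p := by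
      apply Nat.mul_le_mul_right; omega
    omega
  have hbmono : Monotone b := by
    intro k l hkl
    apply hmono
    simp only [hidxdef, Fin.mk_le_mk]
    have h1 : (k + 1) * p ≤ (l + 1) * p := by apply Nat.mul_le_mul_right; omega
    omega
  set S : Fin (q + 1) → Set ℝ := fun k =>
    if (k : ℕ) = 0 then Set.Iic (b 0)
    else if (k : ℕ) = q then Set.Ici (b (q - 1))
    else Set.Icc (b ((k : ℕ) - 1)) (b (k : ℕ)) with hS
  have hq0' : ¬ q = 0 := by omega
  refine ⟨q + 1, S, ?_, ?_, ?_, ?_⟩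
  · have : q ≤ (n + p - 1) / p := Nat.div_le_div_right (by omega)
    omega
  · -- union covers
    rw [Set.iUnion_eq_univ_iff]
    intro x
    by_cases h0 : x ≤ b 0
    · exact ⟨0, by simp [hS, h0]⟩
    by_cases hlast : b (q - 1) ≤ x
    · refine ⟨⟨q, by omega⟩, ?_⟩
      have hv : ((⟨q, by omega⟩ : Fin (q + 1)) : ℕ) = q := rfl
      simp only [hS, hv, hq0', if_false, if_pos rfl]
      exact hlast
    · have hexists : ∃ k, x ≤ b k := ⟨q - 1, le_of_lt (not_le.1 hlast)⟩
      set K := Nat.find hexists with hK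
      have hxK : x ≤ b K := Nat.find_spec hexists
      have hKmin : ∀ j, j < K → ¬ x ≤ b j := fun j hj => Nat.find_min hexists hj
      have hK0 : ¬ K = 0 := by
        intro h; exact h0 (h ▸ hxK)
      have hKle : K ≤ q - 1 := by
        by_contra h
        exact hKmin (q - 1) (by omega) (le_of_lt (not_le.1 hlast))
      refine ⟨⟨K, by omega⟩, ?_⟩
      have hv : ((⟨K, by omega⟩ : Fin (q + 1)) : ℕ) = K := rfl
      have hKq : ¬ K = q := by omega
      simp only [hS, hv, hK0, hKq, if_false]
      exact ⟨le_of_lt (not_le.1 (hKmin (K - 1) (by omega))), hxK⟩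
  · -- shapes
    intro k
    simp only [hS]
    split_ifs
    · exact Or.inr (Or.inl ⟨_, rfl⟩)
    · exact Or.inr (Or.inr (Or.inl ⟨_, rfl⟩))
    · exact Or.inl ⟨_, _, rfl⟩
  · -- the count
    intro k
    rw [hcardconv]
    rcases Nat.eq_zero_or_pos (k : ℕ) with hk0 | hkpos
    · -- first slab : Iic (b 0)
      have hSk : S k = Set.Iic (b 0) := by simp only [hS]; rw [if_pos hk0]
      have hfeq : (univ.filter (fun j => (Set.Icc (a j) (c j) ∩ S k).Nonempty))
          = univ.filter (fun j => a j ≤ b 0) := by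
        apply Finset.filter_congr
        intro j _
        rw [hSk]
        constructor
        · rintro ⟨x, hx1, hx2⟩; exact le_trans hx1.1 hx2
        · intro h; exact ⟨a j, ⟨le_refl _, hac j⟩, h⟩
      rw [hfeq]
      have hsplit : univ.filter (fun j => a j ≤ b 0)
          ⊆ univ.filter (fun j => a j < b 0) ∪ univ.filter (fun j => a j ≤ b 0 ∧ b 0 ≤ c j) := by
        intro j hj
        simp only [Finset.mem_filter, Finset.mem_union, Finset.mem_univ, true_and] at *
        rcases lt_or_eq_of_le hj with h | h
        · exact Or.inl h
        · exact Or.inr ⟨hj, h ▸ hac j⟩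
      calc _ ≤ _ := Finset.card_le_card hsplit
        _ ≤ (univ.filter (fun j => a j < b 0)).card
            + (univ.filter (fun j => a j ≤ b 0 ∧ b 0 ≤ c j)).card := Finset.card_union_le _ _
        _ ≤ (idx 0 : ℕ) + p := Nat.add_le_add (key_lt' (idx 0)) (hprof (b 0))
        _ ≤ 3 * p := by
            have h1 := hidxval 0 hq1
            omega
    rcases Nat.lt_or_ge (k : ℕ) q with hkq | hkq
    · -- middle slab : Icc s t
      have hk0' : ¬ (k : ℕ) = 0 := by omega
      have hkq'' : ¬ (k : ℕ) = q := by omega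
      have hSk : S k = Set.Icc (b ((k : ℕ) - 1)) (b (k : ℕ)) := by
        simp only [hS, hk0', hkq'', if_false]
      set s := b ((k : ℕ) - 1) with hs
      set t := b (k : ℕ) with ht
      have hst : s ≤ t := hbmono (by omega)
      have hfeq : (univ.filter (fun j => (Set.Icc (a j) (c j) ∩ S k).Nonempty))
          = univ.filter (fun j => a j ≤ t ∧ s ≤ c j) := by
        apply Finset.filter_congr
        intro j _
        rw [hSk]
        constructor
        · rintro ⟨x, hx1, hx2⟩; exact ⟨le_trans hx1.1 hx2.2, le_trans hx2.1 hx1.2⟩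
        · rintro ⟨h1, h2⟩
          exact ⟨max (a j) s, ⟨le_max_left _ _, max_le (hac j) h2⟩,
            ⟨le_max_right _ _, max_le h1 hst⟩⟩
      rw [hfeq]
      have hsplit : univ.filter (fun j => a j ≤ t ∧ s ≤ c j)
          ⊆ (univ.filter (fun j => a j ≤ s ∧ s ≤ c j)
            ∪ univ.filter (fun j => s < a j ∧ a j < t))
            ∪ univ.filter (fun j => a j ≤ t ∧ t ≤ c j) := by
        intro j hj
        simp only [Finset.mem_filter, Finset.mem_union, Finset.mem_univ, true_and] at *
        obtain ⟨h1, h2⟩ := hj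
        rcases le_or_gt (a j) s with h3 | h3
        · exact Or.inl (Or.inl ⟨h3, h2⟩)
        · rcases lt_or_eq_of_le h1 with h4 | h4
          · exact Or.inl (Or.inr ⟨h3, h4⟩)
          · exact Or.inr ⟨h1, h4 ▸ hac j⟩
      have hmid : (univ.filter (fun j => s < a j ∧ a j < t)).card ≤ p - 1 := by
        rcases lt_or_eq_of_le hst with hlt | heq
        · have hdisj : Disjoint (univ.filter (fun j => a j ≤ s))
              (univ.filter (fun j => s < a j ∧ a j < t)) := by
            rw [Finset.disjoint_left]
            intro j hj1 hj2
            simp only [Finset.mem_filter, Finset.mem_univ, true_and] at hj1 hj2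
            exact absurd hj2.1 (not_lt.2 hj1)
          have hsub2 : univ.filter (fun j => a j ≤ s) ∪
              univ.filter (fun j => s < a j ∧ a j < t) ⊆ univ.filter (fun j => a j < t) := by
            intro j hj
            simp only [Finset.mem_filter, Finset.mem_union, Finset.mem_univ, true_and] at *
            rcases hj with h | h
            · exact lt_of_le_of_lt h hlt
            · exact h.2
          have h1 : (univ.filter (fun j => a j ≤ s)).card
              + (univ.filter (fun j => s < a j ∧ a j < t)).card
              ≤ (univ.filter (fun j => a j < t)).card := by
            rw [← Finset.card_union_of_disjoint hdisj]
            exact Finset.card_le_card hsub2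
          have h2 : ((idx ((k:ℕ) - 1) : ℕ)) + 1 ≤ (univ.filter (fun j => a j ≤ s)).card :=
            key_le' (idx ((k:ℕ) - 1))
          have h3 : (univ.filter (fun j => a j < t)).card ≤ (idx (k:ℕ) : ℕ) :=
            key_lt' (idx (k:ℕ))
          have e1 : ((idx ((k:ℕ) - 1) : ℕ)) = ((k:ℕ) - 1 + 1) * p - 1 :=
            hidxval _ (by omega)
          have e2 : ((idx (k:ℕ) : ℕ)) = ((k:ℕ) + 1) * p - 1 := hidxval _ hkq
          have e3 : ((k:ℕ) - 1 + 1) * p = (k:ℕ) * p := by congr 1; omega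
          have e4 : ((k:ℕ) + 1) * p = (k:ℕ) * p + p := by ring
          omega
        · have hempty : univ.filter (fun j => s < a j ∧ a j < t) = ∅ := by
            apply Finset.filter_false_of_mem
            intro j _
            rintro ⟨h1, h2⟩
            exact absurd (heq ▸ lt_trans h1 h2) (lt_irrefl _)
          simp [hempty]
      calc _ ≤ _ := Finset.card_le_card hsplit
        _ ≤ ((univ.filter (fun j => a j ≤ s ∧ s ≤ c j)
            ∪ univ.filter (fun j => s < a j ∧ a j < t))).card
            + (univ.filter (fun j => a j ≤ t ∧ t ≤ c j)).card := Finset.card_union_le _ _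
        _ ≤ (univ.filter (fun j => a j ≤ s ∧ s ≤ c j)).card
            + (univ.filter (fun j => s < a j ∧ a j < t)).card
            + (univ.filter (fun j => a j ≤ t ∧ t ≤ c j)).card :=
              Nat.add_le_add_right (Finset.card_union_le _ _) _
        _ ≤ p + (p - 1) + p := Nat.add_le_add (Nat.add_le_add (hprof s) hmid) (hprof t)
        _ ≤ 3 * p := by omega
    · -- last slab : Ici (b (q-1))
      have hkq' : (k : ℕ) = q := by omega
      have hk0' : ¬ (k : ℕ) = 0 := by omega
      have hSk : S k = Set.Ici (b (q - 1)) := by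
        simp only [hS, hkq', hq0', if_false, if_true]
      set s := b (q - 1) with hs
      have hfeq : (univ.filter (fun j => (Set.Icc (a j) (c j) ∩ S k).Nonempty))
          = univ.filter (fun j => s ≤ c j) := by
        apply Finset.filter_congr
        intro j _
        rw [hSk]
        constructor
        · rintro ⟨x, hx1, hx2⟩; exact le_trans hx2 hx1.2
        · intro h; exact ⟨max (a j) s, ⟨le_max_left _ _, max_le (hac j) h⟩, Set.mem_Ici.2 (le_max_right _ _)⟩
      rw [hfeq]
      have hsplit : univ.filter (fun j => s ≤ c j)
          ⊆ univ.filter (fun j => a j ≤ s ∧ s ≤ c j) ∪ univ.filter (fun j => s < a j) := by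
        intro j hj
        simp only [Finset.mem_filter, Finset.mem_union, Finset.mem_univ, true_and] at *
        rcases le_or_gt (a j) s with h | h
        · exact Or.inl ⟨h, hj⟩
        · exact Or.inr h
      have hhi : (univ.filter (fun j => s < a j)).card ≤ p - 1 := by
        have hcompl : (univ.filter (fun j => a j ≤ s)).card
            + (univ.filter (fun j => ¬ a j ≤ s)).card = n := by
          rw [Finset.card_filter_add_card_filter_not]
          simp
        have heq2 : univ.filter (fun j => s < a j) = univ.filter (fun j => ¬ a j ≤ s) := by
          apply Finset.filter_congr
          intro j _
          simp [not_le]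
        have h2 : ((idx (q - 1) : ℕ)) + 1 ≤ (univ.filter (fun j => a j ≤ s)).card :=
          key_le' (idx (q - 1))
        have e := hidxval (q - 1) (by omega)
        have e3 : (q - 1 + 1) * p = q * p := by congr 1; omega
        rw [heq2]
        omega
      calc _ ≤ _ := Finset.card_le_card hsplit
        _ ≤ (univ.filter (fun j => a j ≤ s ∧ s ≤ c j)).card
            + (univ.filter (fun j => s < a j)).card := Finset.card_union_le _ _
        _ ≤ p + (p - 1) := Nat.add_le_add (hprof s) hhi
        _ ≤ 3 * p := by omega
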